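/- Let m ≥ 2 and p ≥ 1, let μ be a probability measure on m×p real matrices, let q₁,…,q_m be measurable functions from matrices to [0,1] with Σ_j q_j(X) = 1 for μ-a.e. X, and let β⁰ ∈ ℝᵖ with ‖β⁰‖ = 1. Assume: (a) the rank ordering property relative to β⁰; (b) for μ-a.e. X the values ⟨x₁,β⁰⟩,…,⟨x_m,β⁰⟩ are pairwise distinct, and for every unit vector β and all j ≠ k, μ{X : ⟨x_j − x_k, β⟩ = 0} = 0; (c) the transition condition: there exist C > 0 and t* > 0 with 2t*C > 1 such that for all j ≠ k and all t ∈ [0,t*], μ{X : |q_j(X)/(q_j(X)+q_k(X)) − 1/2| ≤ t} ≤ C·t, the ratio being interpreted as 0 when q_j(X)+q_k(X) = 0; (d) the restricted wedge condition: there exist R > 0, c₁ > 0 and c₂ > 0 such that (i) for each j, q_j(X) ≥ c₁ for μ-a.e. X with ‖X‖_F ≤ R, and (ii) for every unit vector β and all j ≠ k, μ({X : sign(⟨x_j − x_k, β⟩) ≠ sign(⟨x_j − x_k, β⁰⟩)} ∩ {X : ‖X‖_F ≤ R}) ≥ c₂·‖β − β⁰‖. Then for every unit vector β ∈ ℝᵖ: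 S(β⁰) − S(β) ≥ (c₁·c₂²/(4C))·‖β − β⁰‖². -/

import Mathlib

open MeasureTheory
open scoped Classical

/-- The multinomial population score
`S(β) = (1/(m(m−1)))·Σ_j ∫ q_j(X)·#{k ≠ j : ⟨x_j,β⟩ > ⟨x_k,β⟩} dμ(X)`,
where the "matrix" `X` is encoded by its rows `X : Fin m → ℝᵖ`. -/
noncomputable def multiScore {m p : ℕ}
    (μ : Measure (Fin m → EuclideanSpace ℝ (Fin p)))
    (q : Fin m → (Fin m → EuclideanSpace ℝ (Fin p)) → ℝ)
    (β : EuclideanSpace ℝ (Fin p)) : ℝ :=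
  (1 / ((m : ℝ) * ((m : ℝ) - 1))) *
    ∑ j : Fin m, ∫ X, q j X *
      ((Finset.univ.filter fun k : Fin m =>
        k ≠ j ∧ (inner ℝ (X k) β : ℝ) < (inner ℝ (X j) β : ℝ)).card : ℝ) ∂μ

/-- The Frobenius norm of the matrix with rows `X 1, …, X m`. -/
noncomputable def frobNorm {m p : ℕ} (X : Fin m → EuclideanSpace ℝ (Fin p)) : ℝ :=
  Real.sqrt (∑ j : Fin m, ‖X j‖ ^ 2)

namespace MultiAux

variable {m p : ℕ}

lemma ite_flip {x y : ℝ} (h : x ≠ y) :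
    (if x < y then (1:ℝ) else 0) = 1 - (if y < x then (1:ℝ) else 0) := by
  rcases h.lt_or_gt with h' | h' <;> simp [h', h'.not_gt, asymm h']

noncomputable def gfun (q : Fin m → (Fin m → EuclideanSpace ℝ (Fin p)) → ℝ)
    (β : EuclideanSpace ℝ (Fin p)) (j k : Fin m)
    (X : Fin m → EuclideanSpace ℝ (Fin p)) : ℝ :=
  q j X * (if (inner ℝ (X k) β : ℝ) < (inner ℝ (X j) β : ℝ) then (1:ℝ) else 0)

lemma meas_ip (β : EuclideanSpace ℝ (Fin p)) (j : Fin m) :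
    Measurable fun X : Fin m → EuclideanSpace ℝ (Fin p) => (inner ℝ (X j) β : ℝ) :=
  (measurable_pi_apply j).inner measurable_const

lemma meas_frob : Measurable (frobNorm : (Fin m → EuclideanSpace ℝ (Fin p)) → ℝ) := by
  apply Real.continuous_sqrt.measurable.comp
  exact Finset.measurable_sum _ fun j _ => ((measurable_pi_apply j).norm.pow_const 2)

lemma meas_gfun (q : Fin m → (Fin m → EuclideanSpace ℝ (Fin p)) → ℝ)
    (hqmeas : ∀ j, Measurable (q j)) (β : EuclideanSpace ℝ (Fin p)) (j k : Fin m) :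
    Measurable (gfun q β j k) :=
  (hqmeas j).mul (Measurable.ite (measurableSet_lt (meas_ip β k) (meas_ip β j))
    measurable_const measurable_const)

lemma integ_bdd (μ : Measure (Fin m → EuclideanSpace ℝ (Fin p))) [IsFiniteMeasure μ]
    {f : (Fin m → EuclideanSpace ℝ (Fin p)) → ℝ} (hf : Measurable f) (b : ℝ)
    (hb : ∀ X, |f X| ≤ b) : Integrable f μ :=
  (integrable_const b).mono' hf.aestronglyMeasurable
    (ae_of_all _ (by simpa [Real.norm_eq_abs] using hb))

lemma integ_gfun (μ : Measure (Fin m → EuclideanSpace ℝ (Fin p))) [IsFiniteMeasure μ]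
    (q : Fin m → (Fin m → EuclideanSpace ℝ (Fin p)) → ℝ)
    (hqmeas : ∀ j, Measurable (q j)) (hq01 : ∀ j X, q j X ∈ Set.Icc (0 : ℝ) 1)
    (β : EuclideanSpace ℝ (Fin p)) (j k : Fin m) : Integrable (gfun q β j k) μ := by
  refine integ_bdd μ (meas_gfun q hqmeas β j k) 1 fun X => ?_
  rcases hq01 j X with ⟨h0, h1⟩
  unfold gfun
  split <;> rw [abs_le] <;> constructor <;> nlinarith

lemma multiScore_eq (μ : Measure (Fin m → EuclideanSpace ℝ (Fin p))) [IsFiniteMeasure μ]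
    (q : Fin m → (Fin m → EuclideanSpace ℝ (Fin p)) → ℝ)
    (hqmeas : ∀ j, Measurable (q j)) (hq01 : ∀ j X, q j X ∈ Set.Icc (0 : ℝ) 1)
    (β : EuclideanSpace ℝ (Fin p)) :
    multiScore μ q β = (1 / ((m : ℝ) * ((m : ℝ) - 1))) *
      ∑ j : Fin m, ∑ k : Fin m, ∫ X, gfun q β j k X ∂μ := by
  unfold multiScore
  congr 1
  refine Finset.sum_congr rfl fun j _ => ?_
  rw [← integral_finset_sum _ fun k _ => integ_gfun μ q hqmeas hq01 β j k]
  refine integral_congr_ae (ae_of_all _ fun X => ?_)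
  have hcard : ((Finset.univ.filter fun k : Fin m =>
      k ≠ j ∧ (inner ℝ (X k) β : ℝ) < (inner ℝ (X j) β : ℝ)).card : ℝ)
      = ∑ k : Fin m, (if (inner ℝ (X k) β : ℝ) < (inner ℝ (X j) β : ℝ) then (1:ℝ) else 0) := by
    rw [Finset.card_filter]
    push_cast
    refine Finset.sum_congr rfl fun k _ => ?_
    by_cases hkj : k = j
    · subst hkj; simp
    · simp [hkj]
  simp only [gfun]
  rw [hcard, Finset.mul_sum]

end MultiAux

open MultiAux in
set_option maxHeartbeats 1000000 in
theorem multinomial_curvature {m p : ℕ}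
    (hm : 2 ≤ m) (hp : 1 ≤ p)
    (μ : Measure (Fin m → EuclideanSpace ℝ (Fin p))) [IsProbabilityMeasure μ]
    (q : Fin m → (Fin m → EuclideanSpace ℝ (Fin p)) → ℝ)
    (hqmeas : ∀ j, Measurable (q j))
    (hq01 : ∀ j X, q j X ∈ Set.Icc (0 : ℝ) 1)
    (hqsum : ∀ᵐ X ∂μ, ∑ j : Fin m, q j X = 1)
    (β0 : EuclideanSpace ℝ (Fin p)) (hβ0 : ‖β0‖ = 1)
    -- (a) rank ordering property relative to β0
    (hrank : ∀ᵐ X ∂μ, ∀ j k : Fin m,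
      q k X ≤ q j X ↔ (inner ℝ (X k) β0 : ℝ) ≤ (inner ℝ (X j) β0 : ℝ))
    -- (b) a.e. pairwise distinct utilities under β0, and null hyperplanes
    (hdistinct : ∀ᵐ X ∂μ, ∀ j k : Fin m, j ≠ k →
      (inner ℝ (X j) β0 : ℝ) ≠ (inner ℝ (X k) β0 : ℝ))
    (hnull : ∀ β : EuclideanSpace ℝ (Fin p), ‖β‖ = 1 → ∀ j k : Fin m, j ≠ k →
      μ {X | (inner ℝ (X j - X k) β : ℝ) = 0} = 0)
    -- (c) transition condition
    (C tstar : ℝ) (hC : 0 < C) (htstar : 0 < tstar) (hCt : 1 < 2 * tstar * C)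
    (htrans : ∀ j k : Fin m, j ≠ k → ∀ t ∈ Set.Icc (0 : ℝ) tstar,
      (μ {X | |q j X / (q j X + q k X) - 1/2| ≤ t}).toReal ≤ C * t)
    -- (d) restricted wedge condition
    (R c₁ c₂ : ℝ) (hR : 0 < R) (hc₁ : 0 < c₁) (hc₂ : 0 < c₂)
    (hlower : ∀ j : Fin m, ∀ᵐ X ∂μ, frobNorm X ≤ R → c₁ ≤ q j X)
    (hwedge : ∀ β : EuclideanSpace ℝ (Fin p), ‖β‖ = 1 → ∀ j k : Fin m, j ≠ k →
      c₂ * ‖β - β0‖ ≤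
        (μ ({X : Fin m → EuclideanSpace ℝ (Fin p) |
              Real.sign (inner ℝ (X j - X k) β : ℝ) ≠
                Real.sign (inner ℝ (X j - X k) β0 : ℝ)} ∩
            {X | frobNorm X ≤ R})).toReal) :
    ∀ β : EuclideanSpace ℝ (Fin p), ‖β‖ = 1 →
      c₁ * c₂ ^ 2 / (4 * C) * ‖β - β0‖ ^ 2 ≤
        multiScore μ q β0 - multiScore μ q β := by
  intro β hβ
  -- basic notation
  set δ : ℝ := ‖β - β0‖ with hδdef
  have hδ0 : 0 ≤ δ := norm_nonneg _
  have hδ2 : δ ≤ 2 := by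
    have := norm_sub_le β β0
    rw [hβ, hβ0] at this
    linarith [this]
  have hmR : (2 : ℝ) ≤ (m : ℝ) := by exact_mod_cast hm
  have hmm : (0 : ℝ) < (m : ℝ) * ((m : ℝ) - 1) := by nlinarith
  -- c₂ ≤ 1/2
  have hc₂half : c₂ ≤ 1 / 2 := by
    have hj : (⟨0, by omega⟩ : Fin m) ≠ ⟨1, by omega⟩ := by simp [Fin.ext_iff]
    have hw := hwedge (-β0) (by simp [hβ0]) ⟨0, by omega⟩ ⟨1, by omega⟩ hj
    have hnorm : ‖-β0 - β0‖ = 2 := by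
      have h2 : -β0 - β0 = (-2 : ℝ) • β0 := by module
      rw [h2, norm_smul, hβ0]; norm_num
    have hle1 : (μ ({X : Fin m → EuclideanSpace ℝ (Fin p) |
        Real.sign (inner ℝ (X ⟨0, by omega⟩ - X ⟨1, by omega⟩) (-β0) : ℝ) ≠
          Real.sign (inner ℝ (X ⟨0, by omega⟩ - X ⟨1, by omega⟩) β0 : ℝ)} ∩
        {X | frobNorm X ≤ R})).toReal ≤ 1 := by
      have h := measure_mono (Set.subset_univ (({X : Fin m → EuclideanSpace ℝ (Fin p) |
        Real.sign (inner ℝ (X ⟨0, by omega⟩ - X ⟨1, by omega⟩) (-β0) : ℝ) ≠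
          Real.sign (inner ℝ (X ⟨0, by omega⟩ - X ⟨1, by omega⟩) β0 : ℝ)} ∩
        {X | frobNorm X ≤ R}))) (μ := μ)
      have := ENNReal.toReal_mono (measure_ne_top μ _) h
      simpa [measure_univ] using this
    rw [hnorm] at hw
    linarith
  -- the threshold
  set t : ℝ := c₂ * δ / (2 * C) with htdef
  have ht0 : 0 ≤ t := by positivity
  have htle : t ≤ tstar := by
    rw [htdef, div_le_iff₀ (by positivity)]
    nlinarith
  set L : ℝ := 4 * c₁ * t * (c₂ * δ - C * t) with hLdef
  -- integrability of the h functions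
  have hint_h : ∀ j k : Fin m, Integrable (fun X => (q j X - q k X) *
      ((if (inner ℝ (X k) β0 : ℝ) < (inner ℝ (X j) β0 : ℝ) then (1:ℝ) else 0) -
       (if (inner ℝ (X k) β : ℝ) < (inner ℝ (X j) β : ℝ) then (1:ℝ) else 0))) μ := by
    intro j k
    refine integ_bdd μ ?_ 1 ?_
    · exact ((hqmeas j).sub (hqmeas k)).mul
        ((Measurable.ite (measurableSet_lt (meas_ip β0 k) (meas_ip β0 j))
            measurable_const measurable_const).sub
         (Measurable.ite (measurableSet_lt (meas_ip β k) (meas_ip β j))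
            measurable_const measurable_const))
    · intro X
      rcases hq01 j X with ⟨hj0, hj1⟩
      rcases hq01 k X with ⟨hk0, hk1⟩
      rw [abs_mul]
      have h1 : |q j X - q k X| ≤ 1 := by rw [abs_le]; constructor <;> linarith
      have h2 : |(if (inner ℝ (X k) β0 : ℝ) < (inner ℝ (X j) β0 : ℝ) then (1:ℝ) else 0) -
          (if (inner ℝ (X k) β : ℝ) < (inner ℝ (X j) β : ℝ) then (1:ℝ) else 0)| ≤ 1 := by
        split <;> split <;> simp
      calc |q j X - q k X| * |_| ≤ 1 * 1 :=
            mul_le_mul h1 h2 (abs_nonneg _) zero_le_one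
        _ = 1 := by norm_num
  -- a.e. nonvanishing of the β-differences
  have hdβ : ∀ j k : Fin m, j ≠ k → ∀ᵐ X ∂μ, (inner ℝ (X j) β : ℝ) ≠ (inner ℝ (X k) β : ℝ) := by
    intro j k hjk
    rw [ae_iff]
    have hset : {X : Fin m → EuclideanSpace ℝ (Fin p) |
        ¬ (inner ℝ (X j) β : ℝ) ≠ (inner ℝ (X k) β : ℝ)} =
        {X | (inner ℝ (X j - X k) β : ℝ) = 0} := by
      ext X; simp [inner_sub_left, sub_eq_zero]
    rw [hset]; exact hnull β hβ j k hjk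
  -- the key pairwise lower bound
  have hpair : ∀ j k : Fin m, j ≠ k →
      L ≤ ((∫ X, gfun q β0 j k X ∂μ) - (∫ X, gfun q β j k X ∂μ)) +
          ((∫ X, gfun q β0 k j X ∂μ) - (∫ X, gfun q β k j X ∂μ)) := by
    intro j k hjk
    -- the good set
    set W : Set (Fin m → EuclideanSpace ℝ (Fin p)) :=
      {X | ((inner ℝ (X k) β0 : ℝ) < (inner ℝ (X j) β0 : ℝ) ∧
              (inner ℝ (X j) β : ℝ) < (inner ℝ (X k) β : ℝ)) ∨
           ((inner ℝ (X j) β0 : ℝ) < (inner ℝ (X k) β0 : ℝ) ∧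
              (inner ℝ (X k) β : ℝ) < (inner ℝ (X j) β : ℝ))} with hWdef
    set B : Set (Fin m → EuclideanSpace ℝ (Fin p)) := {X | frobNorm X ≤ R} with hBdef
    set T : Set (Fin m → EuclideanSpace ℝ (Fin p)) :=
      {X | |q j X / (q j X + q k X) - 1/2| ≤ t} with hTdef
    set G : Set (Fin m → EuclideanSpace ℝ (Fin p)) := (W ∩ B) \ T with hGdef
    have hWm : MeasurableSet W := by
      rw [hWdef]
      simp only [Set.setOf_or, Set.setOf_and]
      exact ((measurableSet_lt (meas_ip β0 k) (meas_ip β0 j)).inter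
              (measurableSet_lt (meas_ip β j) (meas_ip β k))).union
            ((measurableSet_lt (meas_ip β0 j) (meas_ip β0 k)).inter
              (measurableSet_lt (meas_ip β k) (meas_ip β j)))
    have hBm : MeasurableSet B := measurableSet_le meas_frob measurable_const
    have hTm : MeasurableSet T := measurableSet_le
      ((((hqmeas j).div ((hqmeas j).add (hqmeas k))).sub measurable_const).abs)
      measurable_const
    have hGm : MeasurableSet G := (hWm.inter hBm).diff hTm
    -- measure lower bound for G
    have hGlow : c₂ * δ - C * t ≤ (μ G).toReal := by
      have hw := hwedge β hβ j k hjk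
      have hT := htrans j k hjk t ⟨ht0, htle⟩
      set S : Set (Fin m → EuclideanSpace ℝ (Fin p)) :=
        {X | Real.sign (inner ℝ (X j - X k) β : ℝ) ≠
             Real.sign (inner ℝ (X j - X k) β0 : ℝ)} ∩ B with hSdef
      set Z1 : Set (Fin m → EuclideanSpace ℝ (Fin p)) :=
        {X | (inner ℝ (X j - X k) β : ℝ) = 0} with hZ1def
      set Z2 : Set (Fin m → EuclideanSpace ℝ (Fin p)) :=
        {X | (inner ℝ (X j - X k) β0 : ℝ) = 0} with hZ2def
      have hsub : S ⊆ G ∪ (T ∪ (Z1 ∪ Z2)) := by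
        rintro X ⟨hXW, hXB⟩
        by_cases hXT : X ∈ T
        · exact Or.inr (Or.inl hXT)
        by_cases hz1 : X ∈ Z1
        · exact Or.inr (Or.inr (Or.inl hz1))
        by_cases hz2 : X ∈ Z2
        · exact Or.inr (Or.inr (Or.inr hz2))
        left
        refine ⟨⟨?_, hXB⟩, hXT⟩
        have hd : (inner ℝ (X j - X k) β : ℝ) = (inner ℝ (X j) β : ℝ) - (inner ℝ (X k) β : ℝ) :=
          inner_sub_left _ _ _
        have hd0 : (inner ℝ (X j - X k) β0 : ℝ) = (inner ℝ (X j) β0 : ℝ) - (inner ℝ (X k) β0 : ℝ) :=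
          inner_sub_left _ _ _
        have hne : (inner ℝ (X j) β : ℝ) ≠ (inner ℝ (X k) β : ℝ) := by
          intro h; exact hz1 (by simp only [hZ1def, Set.mem_setOf_eq, hd, h, sub_self])
        have hne0 : (inner ℝ (X j) β0 : ℝ) ≠ (inner ℝ (X k) β0 : ℝ) := by
          intro h; exact hz2 (by simp only [hZ2def, Set.mem_setOf_eq, hd0, h, sub_self])
        have hXW' : Real.sign ((inner ℝ (X j) β : ℝ) - (inner ℝ (X k) β : ℝ)) ≠
            Real.sign ((inner ℝ (X j) β0 : ℝ) - (inner ℝ (X k) β0 : ℝ)) := by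
          have hXW2 := hXW
          simp only [Set.mem_setOf_eq] at hXW2
          rwa [hd, hd0] at hXW2
        rcases hne.lt_or_gt with h1 | h1 <;> rcases hne0.lt_or_gt with h2 | h2
        · exfalso
          rw [Real.sign_of_neg (by linarith : (inner ℝ (X j) β : ℝ) - (inner ℝ (X k) β : ℝ) < 0),
              Real.sign_of_neg (by linarith : (inner ℝ (X j) β0 : ℝ) - (inner ℝ (X k) β0 : ℝ) < 0)]
            at hXW'
          exact hXW' rfl
        · exact Or.inl ⟨h2, h1⟩
        · exact Or.inr ⟨h2, h1⟩
        · exfalso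
          rw [Real.sign_of_pos (by linarith : 0 < (inner ℝ (X j) β : ℝ) - (inner ℝ (X k) β : ℝ)),
              Real.sign_of_pos (by linarith : 0 < (inner ℝ (X j) β0 : ℝ) - (inner ℝ (X k) β0 : ℝ))]
            at hXW'
          exact hXW' rfl
      have hZ : μ (Z1 ∪ Z2) = 0 :=
        measure_union_null (hnull β hβ j k hjk) (hnull β0 hβ0 j k hjk)
      have hmeasS : μ S ≤ μ G + μ T := by
        calc μ S ≤ μ (G ∪ (T ∪ (Z1 ∪ Z2))) := measure_mono hsub
          _ ≤ μ G + μ (T ∪ (Z1 ∪ Z2)) := measure_union_le _ _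
          _ ≤ μ G + (μ T + μ (Z1 ∪ Z2)) := add_le_add le_rfl (measure_union_le _ _)
          _ = μ G + μ T := by rw [hZ, add_zero]
      have htr : (μ S).toReal ≤ (μ G).toReal + (μ T).toReal := by
        have h1 := ENNReal.toReal_mono
          (ENNReal.add_ne_top.mpr ⟨measure_ne_top μ G, measure_ne_top μ T⟩) hmeasS
        rwa [ENNReal.toReal_add (measure_ne_top μ G) (measure_ne_top μ T)] at h1
      have := hw.trans htr
      linarith [hT, this]
    -- rewrite the pair difference as a single integral
    have hAeq : ((∫ X, gfun q β0 j k X ∂μ) - (∫ X, gfun q β j k X ∂μ)) +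
        ((∫ X, gfun q β0 k j X ∂μ) - (∫ X, gfun q β k j X ∂μ)) =
        ∫ X, (q j X - q k X) *
          ((if (inner ℝ (X k) β0 : ℝ) < (inner ℝ (X j) β0 : ℝ) then (1:ℝ) else 0) -
           (if (inner ℝ (X k) β : ℝ) < (inner ℝ (X j) β : ℝ) then (1:ℝ) else 0)) ∂μ := by
      have e1 := integral_sub (integ_gfun μ q hqmeas hq01 β0 j k) (integ_gfun μ q hqmeas hq01 β j k)
      have e2 := integral_sub (integ_gfun μ q hqmeas hq01 β0 k j) (integ_gfun μ q hqmeas hq01 β k j)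
      have e3 := integral_add
            ((integ_gfun μ q hqmeas hq01 β0 j k).sub (integ_gfun μ q hqmeas hq01 β j k))
            ((integ_gfun μ q hqmeas hq01 β0 k j).sub (integ_gfun μ q hqmeas hq01 β k j))
      simp only [Pi.sub_apply] at e3
      rw [← e1, ← e2, ← e3]
      refine integral_congr_ae ?_
      filter_upwards [hdistinct, hdβ j k hjk] with X hd hne
      have hne0 : (inner ℝ (X j) β0 : ℝ) ≠ (inner ℝ (X k) β0 : ℝ) := hd j k hjk
      simp only [gfun]
      rw [ite_flip hne0.symm, ite_flip hne.symm]
      ring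
    rw [hAeq]
    -- lower bound the integrand a.e. by the indicator of G
    have key : ∀ᵐ X ∂μ, G.indicator (fun _ => 4 * c₁ * t) X ≤
        (q j X - q k X) *
          ((if (inner ℝ (X k) β0 : ℝ) < (inner ℝ (X j) β0 : ℝ) then (1:ℝ) else 0) -
           (if (inner ℝ (X k) β : ℝ) < (inner ℝ (X j) β : ℝ) then (1:ℝ) else 0)) := by
      filter_upwards [hrank, hdistinct, hlower j, hlower k] with X hr hd hlj hlk
      by_cases hXG : X ∈ G
      · rw [Set.indicator_of_mem hXG]
        obtain ⟨⟨hXW, hXB⟩, hXT⟩ := hXG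
        have hBj : c₁ ≤ q j X := hlj hXB
        have hBk : c₁ ≤ q k X := hlk hXB
        have habs : t < |q j X / (q j X + q k X) - 1/2| := lt_of_not_ge hXT
        have hab : 0 < q j X + q k X := by linarith
        have hdiv : q j X / (q j X + q k X) - 1/2 =
            (q j X - q k X) / (2 * (q j X + q k X)) := by
          field_simp; ring
        rw [hdiv, abs_div, abs_of_pos (by linarith : (0:ℝ) < 2 * (q j X + q k X)),
            lt_div_iff₀ (by linarith : (0:ℝ) < 2 * (q j X + q k X))] at habs
        rcases hXW with ⟨h0, h1⟩ | ⟨h0, h1⟩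
        · -- q j ≥ q k, wedge flipped
          have hq : q k X ≤ q j X := (hr j k).mpr h0.le
          rw [if_pos h0, if_neg (asymm h1)]
          have habs' : |q j X - q k X| = q j X - q k X := abs_of_nonneg (by linarith)
          rw [habs'] at habs
          have h5 : 4 * c₁ * t ≤ t * (2 * (q j X + q k X)) := by
            calc 4 * c₁ * t ≤ 2 * (q j X + q k X) * t :=
                  mul_le_mul_of_nonneg_right (by linarith) ht0
              _ = t * (2 * (q j X + q k X)) := by ring
          linarith
        · have hq : q j X ≤ q k X := (hr k j).mpr h0.le
          rw [if_neg (asymm h0), if_pos h1]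
          have habs' : |q j X - q k X| = -(q j X - q k X) := abs_of_nonpos (by linarith)
          rw [habs'] at habs
          have h5 : 4 * c₁ * t ≤ t * (2 * (q j X + q k X)) := by
            calc 4 * c₁ * t ≤ 2 * (q j X + q k X) * t :=
                  mul_le_mul_of_nonneg_right (by linarith) ht0
              _ = t * (2 * (q j X + q k X)) := by ring
          linarith
      · rw [Set.indicator_of_notMem hXG]
        have hne0 : (inner ℝ (X j) β0 : ℝ) ≠ (inner ℝ (X k) β0 : ℝ) := hd j k hjk
        rcases hne0.lt_or_gt with h0 | h0
        · have hq : q j X ≤ q k X := (hr k j).mpr h0.le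
          rw [if_neg (asymm h0)]
          split <;> linarith
        · have hq : q k X ≤ q j X := (hr j k).mpr h0.le
          rw [if_pos h0]
          split <;> linarith
    have hind : Integrable (G.indicator (fun _ => 4 * c₁ * t)) μ :=
      (integrable_const (4 * c₁ * t)).indicator hGm
    have hmono := integral_mono_ae hind (hint_h j k) key
    have hindval : ∫ X, G.indicator (fun _ => 4 * c₁ * t) X ∂μ =
        (4 * c₁ * t) * (μ G).toReal := by
      rw [integral_indicator_const _ hGm]
      simp [mul_comm, Measure.real]
    rw [hindval] at hmono
    have hstep : L ≤ (4 * c₁ * t) * (μ G).toReal := by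
      rw [hLdef]
      have h4 : 0 ≤ 4 * c₁ * t := by positivity
      exact mul_le_mul_of_nonneg_left hGlow h4
    linarith
  -- assemble
  have hdiff : multiScore μ q β0 - multiScore μ q β
      = (1 / ((m : ℝ) * ((m : ℝ) - 1))) * ∑ j : Fin m, ∑ k : Fin m,
          ((∫ X, gfun q β0 j k X ∂μ) - (∫ X, gfun q β j k X ∂μ)) := by
    rw [multiScore_eq μ q hqmeas hq01 β0, multiScore_eq μ q hqmeas hq01 β, ← mul_sub,
       ← Finset.sum_sub_distrib]
    simp_rw [← Finset.sum_sub_distrib]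
  set D : Fin m → Fin m → ℝ := fun j k =>
    (∫ X, gfun q β0 j k X ∂μ) - (∫ X, gfun q β j k X ∂μ) with hDdef
  have hDdiag : ∀ j : Fin m, D j j = 0 := by
    intro j
    simp only [hDdef]
    have : ∀ γ : EuclideanSpace ℝ (Fin p), ∫ X, gfun q γ j j X ∂μ = 0 := by
      intro γ
      have : gfun q γ j j = fun _ => (0:ℝ) := by
        funext X; simp [gfun]
      rw [this, integral_zero]
    rw [this β0, this β, sub_zero]
  have hsym : 2 * (∑ j : Fin m, ∑ k : Fin m, D j k)
      = ∑ j : Fin m, ∑ k : Fin m, (D j k + D k j) := by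
    have hcomm : ∑ j : Fin m, ∑ k : Fin m, D k j = ∑ j : Fin m, ∑ k : Fin m, D j k :=
      Finset.sum_comm
    simp only [Finset.sum_add_distrib]
    rw [hcomm]
    ring
  have hLnonneg : 0 ≤ L := by
    rw [hLdef, htdef]
    have hCt' : c₂ * δ - C * (c₂ * δ / (2 * C)) = c₂ * δ / 2 := by
      field_simp; ring
    rw [hCt']
    positivity
  have hsumlow : (m : ℝ) * (((m : ℝ) - 1) * L) ≤ ∑ j : Fin m, ∑ k : Fin m, (D j k + D k j) := by
    have hinner : ∀ j : Fin m, ((m : ℝ) - 1) * L ≤ ∑ k : Fin m, (D j k + D k j) := by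
      intro j
      have hb : ∀ k : Fin m, (if k = j then (0:ℝ) else L) ≤ D j k + D k j := by
        intro k
        by_cases hkj : k = j
        · subst hkj; simp [hDdiag k]
        · simpa [hkj] using hpair j k (Ne.symm hkj)
      calc ((m : ℝ) - 1) * L = ∑ k : Fin m, (if k = j then (0:ℝ) else L) := by
            have h1 : ∀ k : Fin m, (if k = j then (0:ℝ) else L)
                = L - (if k = j then L else 0) := by intro k; split <;> ring
            simp_rw [h1]
            rw [Finset.sum_sub_distrib, Finset.sum_const,
              Finset.sum_ite_eq' Finset.univ j (fun _ => L)]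
            simp [Finset.card_univ]
            ring
        _ ≤ ∑ k : Fin m, (D j k + D k j) := Finset.sum_le_sum fun k _ => hb k
    calc (m : ℝ) * (((m : ℝ) - 1) * L) = ∑ _j : Fin m, ((m : ℝ) - 1) * L := by
          rw [Finset.sum_const, Finset.card_univ]; simp
      _ ≤ _ := Finset.sum_le_sum fun j _ => hinner j
  rw [hdiff]
  have hStot : (m : ℝ) * (((m : ℝ) - 1) * L) / 2 ≤ ∑ j : Fin m, ∑ k : Fin m, D j k := by
    rw [div_le_iff₀ (by norm_num : (0:ℝ) < 2)]
    calc (m : ℝ) * (((m : ℝ) - 1) * L) ≤ ∑ j : Fin m, ∑ k : Fin m, (D j k + D k j) := hsumlow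
      _ = 2 * (∑ j : Fin m, ∑ k : Fin m, D j k) := hsym.symm
      _ = (∑ j : Fin m, ∑ k : Fin m, D j k) * 2 := by ring
  have hgoal : c₁ * c₂ ^ 2 / (4 * C) * δ ^ 2 * ((m : ℝ) * ((m : ℝ) - 1))
      ≤ ∑ j : Fin m, ∑ k : Fin m, D j k := by
    refine le_trans ?_ hStot
    have hLval : L = c₁ * c₂ ^ 2 * δ ^ 2 / C := by
      rw [hLdef, htdef]
      field_simp
      ring
    rw [hLval]
    have e : c₁ * c₂ ^ 2 / (4 * C) * δ ^ 2 * ((m:ℝ) * ((m:ℝ)-1))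
        = ((m:ℝ)*((m:ℝ)-1)) * (c₁ * c₂^2 * δ^2) / (4*C) := by ring
    have e2 : (m:ℝ) * (((m:ℝ)-1) * (c₁ * c₂ ^ 2 * δ ^ 2 / C)) / 2
        = ((m:ℝ)*((m:ℝ)-1)) * (c₁ * c₂^2 * δ^2) / (2*C) := by ring
    rw [e, e2]
    have hnum : 0 ≤ ((m:ℝ)*((m:ℝ)-1)) * (c₁ * c₂^2 * δ^2) := by positivity
    exact div_le_div_of_nonneg_left hnum (by positivity) (by linarith)
  calc c₁ * c₂ ^ 2 / (4 * C) * δ ^ 2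
      = (1 / ((m : ℝ) * ((m : ℝ) - 1))) *
        (c₁ * c₂ ^ 2 / (4 * C) * δ ^ 2 * ((m : ℝ) * ((m : ℝ) - 1))) := by
        field_simp
        rw [mul_div_assoc, div_self (by linarith : (m:ℝ) - 1 ≠ 0), mul_one]
    _ ≤ (1 / ((m : ℝ) * ((m : ℝ) - 1))) * ∑ j : Fin m, ∑ k : Fin m, D j k := by
        apply mul_le_mul_of_nonneg_left hgoal
        positivity
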